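/- Let (A_n, R_n, φ_n^{n+1}) be as in the context, with projective limit 𝔸 and relation R^𝔸, and assume R^𝔸 is transitive (hence a closed equivalence relation on 𝔸). Let p : 𝔸 → 𝔸/R^𝔸 be the quotient map onto the quotient topological space. Then the following are equivalent: (1) the set of points of 𝔸 whose R^𝔸-equivalence class is a singleton is dense in 𝔸; (2) for each n and each a ∈ A_n there are m > n and b ∈ A_m such that every b' with R_m(b', b) satisfies φ_n^m(b') = a; (3) p is irreducible. -/

import Mathlib

/-- The projective (inverse) limit of a sequence of sets with bonding maps. -/
def InvLim (A : ℕ → Type*) (φ : ∀ n, A (n+1) → A n) : Type _ :=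
  {u : ∀ n, A n // ∀ n, φ n (u (n+1)) = u n}

/-- The topology of the projective limit: the subspace topology inside the product of the
discrete spaces `A n`. -/
instance (A : ℕ → Type*) (φ : ∀ n, A (n+1) → A n) : TopologicalSpace (InvLim A φ) :=
  letI : ∀ n, TopologicalSpace (A n) := fun _ => ⊥
  inferInstanceAs (TopologicalSpace {u : ∀ n, A n // ∀ n, φ n (u (n+1)) = u n})

/-- The composite bonding map `φ_n^{n+k} : A (n+k) → A n`. -/
def bond {A : ℕ → Type*} (φ : ∀ n, A (n+1) → A n) (n : ℕ) : ∀ k, A (n + k) → A n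
  | 0, a => a
  | k+1, a => bond φ n k (φ (n+k) a)

/-- The relation `R^𝔸` on the projective limit. -/
def limRel (A : ℕ → Type*) (R : ∀ n, A n → A n → Prop) (φ : ∀ n, A (n+1) → A n)
    (u v : InvLim A φ) : Prop := ∀ n, R n (u.val n) (v.val n)

section Aux
variable {A : ℕ → Type*} {φ : ∀ n, A (n+1) → A n}

theorem bond_zero (n : ℕ) (a : A (n+0)) : bond φ n 0 a = a := rfl
theorem bond_succ (n k : ℕ) (a : A (n+(k+1))) :
    bond φ n (k+1) a = bond φ n k (φ (n+k) a) := rfl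

theorem bond_congr {m k1 k2 : ℕ} (h : k1 = k2) (x1 : A (m+k1)) (x2 : A (m+k2))
    (hx : HEq x1 x2) : bond φ m k1 x1 = bond φ m k2 x2 := by
  subst h; rw [eq_of_heq hx]

theorem cast_phi {M1 M2 : ℕ} (h : M1 = M2) (hx : A (M2+1) = A (M1+1))
    (hy : A M2 = A M1) (a : A (M2+1)) :
    φ M1 (cast hx a) = cast hy (φ M2 a) := by
  subst h; rfl

/-- `down m M : A M → A m`, the composite bonding map (junk if `m > M`). -/
noncomputable def down (φ : ∀ n, A (n+1) → A n) [∀ n, Nonempty (A n)]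
    (m M : ℕ) (a : A M) : A m :=
  if h : m ≤ M then bond φ m (M - m) (cast (congrArg A (by omega : M = m + (M - m))) a)
  else Classical.arbitrary _

variable [∀ n, Nonempty (A n)]

theorem down_bond (n k : ℕ) (a : A (n+k)) : down φ n (n+k) a = bond φ n k a := by
  rw [down, dif_pos (by omega)]
  exact bond_congr (by omega) _ _ (cast_heq _ _)

theorem down_self (m : ℕ) (a : A m) : down φ m m a = a := by
  have : down φ m (m+0) a = bond φ m 0 a := down_bond m 0 a
  exact this

theorem down_succ {m M : ℕ} (h : m ≤ M) (a : A (M+1)) :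
    down φ m (M+1) a = down φ m M (φ M a) := by
  rw [down, dif_pos (by omega), down, dif_pos h]
  have hk : (M+1) - m = (M - m) + 1 := by omega
  rw [bond_congr hk _ (cast (congrArg A (by omega : M + 1 = m + ((M-m)+1))) a)
    ((cast_heq _ _).trans (cast_heq _ _).symm)]
  rw [bond_succ]
  congr 1
  exact cast_phi (show m + (M - m) = M by omega) _ _ a


theorem down_trans {m M M' : ℕ} (h1 : m ≤ M) (h2 : M ≤ M') (a : A M') :
    down φ m M' a = down φ m M (down φ M M' a) := by
  induction M', h2 using Nat.le_induction with
  | base => rw [down_self]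
  | succ M' h2 ih =>
    rw [down_succ (h1.trans h2), down_succ h2, ih]

theorem down_thread (u : InvLim A φ) {m M : ℕ} (h : m ≤ M) :
    down φ m M (u.val M) = u.val m := by
  induction M, h using Nat.le_induction with
  | base => rw [down_self]
  | succ M h ih => rw [down_succ h, u.2, ih]

theorem down_surj (hsurj : ∀ n, Function.Surjective (φ n)) {m M : ℕ} (h : m ≤ M) :
    Function.Surjective (down φ m M) := by
  induction M, h using Nat.le_induction with
  | base => intro b; exact ⟨b, down_self m b⟩
  | succ M h ih =>
    intro b
    obtain ⟨c, hc⟩ := ih b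
    obtain ⟨d, hd⟩ := hsurj M c
    exact ⟨d, by rw [down_succ h, hd, hc]⟩

theorem down_rel {R : ∀ n, A n → A n → Prop}
    (him1 : ∀ n, ∀ a b : A (n+1), R (n+1) a b → R n (φ n a) (φ n b))
    {m M : ℕ} (h : m ≤ M) {x y : A M} (hxy : R M x y) :
    R m (down φ m M x) (down φ m M y) := by
  induction M, h using Nat.le_induction with
  | base => rw [down_self, down_self]; exact hxy
  | succ M h ih => rw [down_succ h, down_succ h]; exact ih (him1 M _ _ hxy)

theorem phi_down {m M : ℕ} (h : m + 1 ≤ M) (x : A M) :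
    φ m (down φ (m+1) M x) = down φ m M x := by
  induction M, h using Nat.le_induction with
  | base => rw [down_self, down_succ (le_refl m), down_self]
  | succ M h ih => rw [down_succ h, down_succ (by omega : m ≤ M), ih]

theorem chain_inter {α : Type*} [Finite α] (B : ℕ → Set α)
    (hne : ∀ j, (B j).Nonempty) (hdec : ∀ j, B (j+1) ⊆ B j) :
    (⋂ j, B j).Nonempty := by
  have hmono : ∀ {j j'}, j ≤ j' → B j' ⊆ B j := by
    intro j j' h
    induction j', h using Nat.le_induction with
    | base => exact le_refl _
    | succ j' h ih => exact (hdec j').trans ih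
  have hfin : ∀ j, (B j).Finite := fun j => Set.toFinite _
  set f : ℕ → ℕ := fun j => (B j).ncard with hf
  have hr : (Set.range f).Nonempty := ⟨f 0, 0, rfl⟩
  obtain ⟨j0, hj0⟩ := Nat.sInf_mem hr
  have hmin : ∀ j, f j0 ≤ f j := fun j => by
    rw [hj0]; exact Nat.sInf_le ⟨j, rfl⟩
  obtain ⟨c, hc⟩ := hne j0
  refine ⟨c, Set.mem_iInter.mpr fun j => ?_⟩
  rcases le_or_gt j j0 with h | h
  · exact hmono h hc
  · have hsub : B j ⊆ B j0 := hmono h.le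
    have : B j = B j0 :=
      Set.eq_of_subset_of_ncard_le hsub (hmin j) (hfin j0)
    rw [this]; exact hc


theorem koenig [∀ n, Fintype (A n)] (S : ∀ m, Set (A m))
    (hne : ∀ m, (S m).Nonempty) (hstab : ∀ m, ∀ c ∈ S (m+1), φ m c ∈ S m) :
    ∃ u : InvLim A φ, ∀ m, u.val m ∈ S m := by
  classical
  set E : ∀ m, Set (A m) :=
    fun m => ⋂ M, {c | m ≤ M → c ∈ down φ m M '' S M} with hE
  have hES : ∀ m, E m ⊆ S m := by
    intro m c hc
    obtain ⟨e, he, hde⟩ := Set.mem_iInter.mp hc m (le_refl m)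
    rw [down_self] at hde
    rwa [← hde]
  have hEne : ∀ m, (E m).Nonempty := by
    intro m
    refine chain_inter _ ?_ ?_
    · intro M
      rcases le_or_gt m M with h | h
      · obtain ⟨e, he⟩ := hne M
        exact ⟨down φ m M e, fun _ => ⟨e, he, rfl⟩⟩
      · exact ⟨Classical.arbitrary _, fun h' => absurd h' (by omega)⟩
    · intro M c hc h
      obtain ⟨e, he, hde⟩ := hc (by omega)
      exact ⟨φ M e, hstab M e he, by rw [← down_succ h, hde]⟩
  have hstep : ∀ m, ∀ c ∈ E m, ∃ d ∈ E (m+1), φ m d = c := by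
    intro m c hc
    have hC : (⋂ M, {d : A (m+1) |
        (m+1 ≤ M → d ∈ down φ (m+1) M '' S M) ∧ φ m d = c}).Nonempty := by
      refine chain_inter _ ?_ ?_
      · intro M
        rcases le_or_gt (m+1) M with h | h
        · obtain ⟨e, he, hde⟩ := Set.mem_iInter.mp hc M (by omega)
          refine ⟨down φ (m+1) M e, fun _ => ⟨e, he, rfl⟩, ?_⟩
          rw [phi_down (φ := φ) h, hde]
        · obtain ⟨e, he, hde⟩ := Set.mem_iInter.mp hc (m+1) (by omega)
          rw [down_succ (le_refl m), down_self] at hde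
          exact ⟨e, fun h' => absurd h' (by omega), hde⟩
      · intro M d hd
        refine ⟨fun h => ?_, hd.2⟩
        obtain ⟨e, he, hde⟩ := hd.1 (by omega)
        exact ⟨φ M e, hstab M e he, by rw [← down_succ h, hde]⟩
    obtain ⟨d, hd⟩ := hC
    refine ⟨d, ?_, (Set.mem_iInter.mp hd 0).2⟩
    exact Set.mem_iInter.mpr fun M => (Set.mem_iInter.mp hd M).1
  choose! step hstep1 hstep2 using hstep
  let f : ∀ m, {c : A m // c ∈ E m} := fun m =>
    Nat.rec ⟨(hEne 0).choose, (hEne 0).choose_spec⟩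
      (fun m p => ⟨step m p.1, hstep1 m p.1 p.2⟩) m
  refine ⟨⟨fun m => (f m).1, fun m => hstep2 m (f m).1 (f m).2⟩,
    fun m => hES m (f m).2⟩

theorem isOpen_cyl (n : ℕ) (a : A n) :
    IsOpen {v : InvLim A φ | v.val n = a} := by
  letI : ∀ n, TopologicalSpace (A n) := fun _ => ⊥
  haveI : ∀ n, DiscreteTopology (A n) := fun n => ⟨rfl⟩
  exact isOpen_induced_iff.mpr
    ⟨{f : ∀ n, A n | f n = a},
      (isOpen_discrete {a}).preimage (continuous_apply n), rfl⟩

theorem exists_cyl_subset {U : Set (InvLim A φ)} (hU : IsOpen U)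
    {u : InvLim A φ} (hu : u ∈ U) :
    ∃ n, ∀ v : InvLim A φ, v.val n = u.val n → v ∈ U := by
  letI : ∀ n, TopologicalSpace (A n) := fun _ => ⊥
  haveI : ∀ n, DiscreteTopology (A n) := fun n => ⟨rfl⟩
  obtain ⟨V, hV, rfl⟩ := isOpen_induced_iff.mp hU
  obtain ⟨I, W, hW, hsub⟩ := isOpen_pi_iff.mp hV u.val hu
  set N := I.sup id with hN
  refine ⟨N, fun v hv => ?_⟩
  have hvi : ∀ i ∈ I, v.val i = u.val i := by
    intro i hi
    have hle : i ≤ N := Finset.le_sup (f := id) hi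
    rw [← down_thread (φ := φ) v hle, ← down_thread (φ := φ) u hle, hv]
  exact hsub fun i hi => by rw [hvi i hi]; exact (hW i hi).2

theorem exists_thread_through (hsurj : ∀ n, Function.Surjective (φ n))
    [∀ n, Fintype (A n)] (n : ℕ) (a : A n) :
    ∃ u : InvLim A φ, u.val n = a := by
  obtain ⟨u, hu⟩ := koenig (φ := φ)
    (fun m => {c | ∀ h : n ≤ m, down φ n m c = a})
    (fun m => by
      rcases le_or_gt n m with h | h
      · obtain ⟨c, hc⟩ := down_surj (φ := φ) hsurj h a
        exact ⟨c, fun _ => hc⟩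
      · exact ⟨Classical.arbitrary _, fun h' => absurd h' (by omega)⟩)
    (fun m c hc h => by rw [← down_succ h]; exact hc (by omega))
  refine ⟨u, ?_⟩
  have := hu n (le_refl n)
  rwa [down_self] at this

end Aux

/-- For a fine projective sequence the following are equivalent: the points with singleton
equivalence class are dense; a combinatorial condition on the sequence; the quotient map
is irreducible. -/
theorem stmt_7 (A : ℕ → Type*) [∀ n, Fintype (A n)] [∀ n, Nonempty (A n)]
    (R : ∀ n, A n → A n → Prop)
    (hrefl : ∀ n, Reflexive (R n)) (hsymm : ∀ n, Symmetric (R n))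
    (φ : ∀ n, A (n+1) → A n) (hsurj : ∀ n, Function.Surjective (φ n))
    (him1 : ∀ n, ∀ a b : A (n+1), R (n+1) a b → R n (φ n a) (φ n b))
    (him2 : ∀ n, ∀ a b : A n, R n a b →
      ∃ a' b' : A (n+1), R (n+1) a' b' ∧ φ n a' = a ∧ φ n b' = b)
    (htrans : Transitive (limRel A R φ)) :
    List.TFAE [
      Dense {u : InvLim A φ | ∀ v, limRel A R φ u v → v = u},
      ∀ (n : ℕ) (a : A n), ∃ k, 0 < k ∧ ∃ b : A (n + k),
        ∀ b', R (n + k) b' b → bond φ n k b' = a,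
      ∀ K : Set (InvLim A φ), IsClosed K → K ≠ Set.univ →
        Quot.mk (limRel A R φ) '' K ≠ Set.univ
    ] := by
  have equiv : Equivalence (limRel A R φ) :=
    ⟨fun u n => hrefl n _, fun h n => hsymm n (h n), fun h1 h2 => htrans h1 h2⟩
  tfae_have 2 → 1
  | h2 => by
    rw [dense_iff_inter_open]
    intro U hU hUne
    obtain ⟨u, hu⟩ := hUne
    obtain ⟨n0, hcyl⟩ := exists_cyl_subset (φ := φ) hU hu
    choose Kf hKf B hB using h2
    let g : ℕ → Σ m, A m := fun i =>
      Nat.rec ⟨n0, u.val n0⟩ (fun _ p => ⟨p.1 + Kf p.1 p.2, B p.1 p.2⟩) i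
    let ν : ℕ → ℕ := fun i => (g i).1
    let α : ∀ i, A (ν i) := fun i => (g i).2
    have hmono : ∀ i, ν i < ν (i+1) := by
      intro i
      have h := hKf (ν i) (α i)
      have : ν (i+1) = ν i + Kf (ν i) (α i) := rfl
      omega
    have sm : StrictMono ν := strictMono_nat_of_lt_succ hmono
    have hle : ∀ i, i ≤ ν i := by
      intro i
      induction i with
      | zero => omega
      | succ i ih => have := hmono i; omega
    have hB2 : ∀ i (b' : A (ν (i+1))), R (ν (i+1)) b' (α (i+1)) →
        down φ (ν i) (ν (i+1)) b' = α i := by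
      intro i b' hb'
      exact (down_bond (φ := φ) _ _ _).trans (hB (ν i) (α i) b' hb')
    have hα : ∀ i, down φ (ν i) (ν (i+1)) (α (i+1)) = α i :=
      fun i => hB2 i _ (hrefl _ _)
    have claim2 : ∀ i j, i ≤ j → down φ (ν i) (ν j) (α j) = α i := by
      intro i j h
      induction j, h using Nat.le_induction with
      | base => exact down_self _ _
      | succ j h ih =>
        rw [down_trans (sm.monotone h) (hmono j).le, hα j, ih]
    obtain ⟨u', hu'⟩ := koenig (φ := φ)
      (fun m => {c | ∀ i, m ≤ ν i → down φ m (ν i) (α i) = c})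
      (by
        intro m
        refine ⟨down φ m (ν m) (α m), ?_⟩
        intro i hi
        rcases le_total i m with h | h
        · rw [down_trans (φ := φ) hi (sm.monotone h) (α m), claim2 i m h]
        · rw [down_trans (φ := φ) (hle m) (sm.monotone h) (α i), claim2 m i h]
      )
      (by
        intro m c hc i hi
        rcases eq_or_lt_of_le hi with he | hlt
        · subst he
          have h1 : ν i + 1 ≤ ν (i+1) := hmono i
          rw [down_self, ← hc (i+1) h1, phi_down (φ := φ) h1]
          exact (hα i).symm
        · rw [← hc i hlt, phi_down (φ := φ) hlt]
      )
    have hu'ν : ∀ i, u'.val (ν i) = α i := by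
      intro i
      have h := hu' (ν i) i (le_refl _)
      rw [down_self] at h
      exact h.symm
    have hu'n : u'.val n0 = u.val n0 := by
      have h := hu' n0 0 (le_refl n0)
      rw [← h]
      exact down_self _ _
    refine ⟨u', hcyl u' hu'n, ?_⟩
    intro v hv
    have hvν : ∀ i, v.val (ν i) = α i := by
      intro i
      have hr : R (ν (i+1)) (v.val (ν (i+1))) (α (i+1)) := by
        have h := hsymm _ (hv (ν (i+1)))
        rwa [hu'ν (i+1)] at h
      have h := hB2 i (v.val (ν (i+1))) hr
      rwa [down_thread (φ := φ) v (sm.monotone (Nat.le_succ i))] at h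
    apply Subtype.ext
    funext m
    rw [← down_thread (φ := φ) v (hle m), ← down_thread (φ := φ) u' (hle m),
      hvν m, hu'ν m]
  tfae_have 1 → 3
  | h1 => by
    intro K hK hKne himg
    obtain ⟨u, hu⟩ := (Set.ne_univ_iff_exists_notMem K).mp hKne
    obtain ⟨n, hcyl⟩ := exists_cyl_subset (φ := φ) hK.isOpen_compl hu
    obtain ⟨w, hw1, hw2⟩ := h1.inter_open_nonempty _
      (isOpen_cyl (φ := φ) n (u.val n)) ⟨u, rfl⟩
    have hmem : Quot.mk (limRel A R φ) w ∈ Quot.mk (limRel A R φ) '' K :=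
      himg ▸ Set.mem_univ _
    obtain ⟨v, hvK, hveq⟩ := hmem
    have hrel : limRel A R φ v w := (equiv.eqvGen_iff).mp (Quot.eq.mp hveq)
    have hvw : v = w := hw2 v (fun m => hsymm m (hrel m))
    exact (hcyl w hw1) (hvw ▸ hvK)
  tfae_have 3 → 2
  | h3 => by
    intro n a
    by_contra hcon
    push_neg at hcon
    set K : Set (InvLim A φ) := {v | v.val n ≠ a} with hKdef
    have hKclosed : IsClosed K := by
      have h : K = {v : InvLim A φ | v.val n = a}ᶜ := by
        ext v; simp [hKdef]
      rw [h]
      exact (isOpen_cyl (φ := φ) n a).isClosed_compl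
    have hKne : K ≠ Set.univ := by
      obtain ⟨u, hun⟩ := exists_thread_through (φ := φ) hsurj n a
      intro h
      exact (h ▸ Set.mem_univ u : u ∈ K) hun
    apply h3 K hKclosed hKne
    ext q
    simp only [Set.mem_univ, iff_true]
    obtain ⟨u, hq⟩ := Quot.exists_rep q
    rcases eq_or_ne (u.val n) a with hun | hun
    · obtain ⟨v, hv⟩ := koenig (φ := φ)
        (fun m => {c | R m c (u.val m) ∧ ∀ _ : n ≤ m, down φ n m c ≠ a})
        (by
          have hstab : ∀ m, ∀ c ∈ {c | R (m+1) c (u.val (m+1)) ∧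
              ∀ _ : n ≤ m+1, down φ n (m+1) c ≠ a},
              φ m c ∈ {c | R m c (u.val m) ∧ ∀ _ : n ≤ m, down φ n m c ≠ a} := by
            intro m c hc
            refine ⟨?_, ?_⟩
            · have h := him1 m _ _ hc.1
              rwa [u.2 m] at h
            · intro h
              rw [← down_succ (φ := φ) h]
              exact hc.2 (by omega)
          have hhigh : ∀ k, 0 < k → ∃ c, c ∈ {c | R (n+k) c (u.val (n+k)) ∧
              ∀ _ : n ≤ n+k, down φ n (n+k) c ≠ a} := by
            intro k hk
            obtain ⟨b', hb1, hb2⟩ := hcon k hk (u.val (n+k))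
            refine ⟨b', hb1, fun _ => ?_⟩
            rw [down_bond]
            exact hb2
          intro m
          rcases lt_or_ge m n with h | h
          · exact ⟨u.val m, hrefl m _, fun h' => absurd h' (by omega)⟩
          · obtain ⟨k, rfl⟩ : ∃ k, m = n + k := ⟨m - n, by omega⟩
            rcases Nat.eq_zero_or_pos k with rfl | hk
            · obtain ⟨c, hc⟩ := hhigh 1 one_pos
              exact ⟨φ (n+0) c, hstab (n+0) c hc⟩
            · exact hhigh k hk
        )
        (by
          intro m c hc
          refine ⟨?_, ?_⟩
          · have h := him1 m _ _ hc.1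
            rwa [u.2 m] at h
          · intro h
            rw [← down_succ (φ := φ) h]
            exact hc.2 (by omega)
        )
      have hvK : v ∈ K := by
        have h := (hv n).2 (le_refl n)
        rwa [down_self] at h
      have hrel : limRel A R φ v u := fun m => (hv m).1
      exact ⟨v, hvK, (Quot.sound hrel).trans hq⟩
    · exact ⟨u, hun, hq⟩
  tfae_finish
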